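/- Let n be divisible by 4 and h(z) = Σ_{i=0}^{n-1} a_i z^i ∈ F_2[z]/(z^n-1) with a_0 = 1. If h(z) = g(z)·g*(z) in F_2[z]/(z^n-1) for some g ∈ F_2[z]/(z^n-1), then Σ_{1 ≤ i ≤ n/2 - 1, i odd} a_i = 0. -/

import Mathlib

open Polynomial Finset

/-- Cyclic convolution: multiplication in `F[x]/(x^n - 1)` on coefficient vectors. -/
def cconv (n : ℕ) [NeZero n] {F : Type*} [CommRing F] (a b : ZMod n → F) : ZMod n → F :=
  fun k => ∑ i : ZMod n, a i * b (k - i)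

/-- Reciprocal polynomial `g*(z) = Σ b_i z^{n-i}` on coefficient vectors. -/
def cstar (n : ℕ) {F : Type*} (a : ZMod n → F) : ZMod n → F := fun i => a (-i)

/-- The polynomial `Σ_{i=0}^{n-1} a_i x^i` attached to a coefficient vector. -/
noncomputable def toPoly (n : ℕ) [NeZero n] {F : Type*} [CommRing F] (a : ZMod n → F) : Polynomial F :=
  ∑ i : Fin n, Polynomial.C (a ((i : ℕ) : ZMod n)) * Polynomial.X ^ (i : ℕ)

theorem stmt_5 (n : ℕ) [NeZero n] (hn : 4 ∣ n)
    (a g : ZMod n → ZMod 2) (ha0 : a 0 = 1)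
    (hfac : a = cconv n g (cstar n g)) :
    ∑ i ∈ (Finset.Ico 1 (n / 2)).filter (fun i => Odd i), a ((i : ℕ) : ZMod n) = 0 := by
  classical
  have h2 : (2:ℕ) ∣ n := dvd_trans (by norm_num) hn
  have hn0 : n ≠ 0 := NeZero.ne n
  have hn22 : 2 * (n / 2) = n := Nat.two_mul_div_two_of_even (even_iff_two_dvd.mpr h2)
  have hhalf_even : 2 ∣ (n / 2) := by
    obtain ⟨m, rfl⟩ := hn; exact ⟨m, by omega⟩
  -- parity function
  set e : ZMod n → ZMod 2 := fun x => (x.val : ZMod 2) with he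
  have ecast : ∀ x : ZMod n, e x = ZMod.castHom h2 (ZMod 2) x := by
    intro x; simp [he, ZMod.natCast_val, ZMod.castHom_apply]
  have hsubadd : ∀ u v : ZMod 2, u - v = u + v := by decide
  have esub : ∀ x y : ZMod n, e (x - y) = e x + e y := by
    intro x y; rw [ecast, ecast, ecast, map_sub, hsubadd]
  have enat : ∀ j : ℕ, e ((j : ℕ) : ZMod n) = (j : ZMod 2) := by
    intro j; rw [ecast]; simp
  have hodd_cast : ∀ m : ℕ, Odd m ↔ (m : ZMod 2) = 1 := by
    intro m
    rw [Nat.odd_iff, ← ZMod.natCast_mod m 2]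
    rcases Nat.mod_two_eq_zero_or_one m with h|h <;> rw [h] <;> decide
  have h01 : ∀ u : ZMod 2, u ≠ 0 ↔ u = 1 := by decide
  -- the two index sets
  set Ev : Finset (ZMod n) := univ.filter (fun p => e p = 0) with hEv
  set Od : Finset (ZMod n) := univ.filter (fun p => e p = 1) with hOd
  set E : ZMod 2 := ∑ p ∈ Ev, g p with hE
  set O : ZMod 2 := ∑ p ∈ Od, g p with hO
  -- a k = ∑ i, g i * g (i - k)
  have hak : ∀ k : ZMod n, a k = ∑ i : ZMod n, g i * g (i - k) := by
    intro k
    rw [hfac]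
    unfold cconv cstar
    refine Finset.sum_congr rfl fun i _ => ?_
    congr 1
    ring_nf
  -- Step 1 : E + O = 1
  have hEO : E + O = 1 := by
    have h1 : ∑ i : ZMod n, g i = 1 := by
      have := hak 0
      simp only [sub_zero] at this
      have hsq : ∀ u : ZMod 2, u * u = u := by decide
      rw [ha0] at this
      rw [this]
      exact Finset.sum_congr rfl fun i _ => (hsq (g i)).symm
    rw [hE, hO, ← h1]
    rw [hEv, hOd]
    rw [← Finset.sum_filter_add_sum_filter_not univ (fun p => e p = 0) g]
    congr 1
    apply Finset.sum_congr _ fun _ _ => rfl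
    apply Finset.filter_congr
    intro x _
    simpa using (h01 (e x)).symm
  -- Step 2 : the main sum equals E * O
  have hmain : ∑ i ∈ (Finset.Ico 1 (n / 2)).filter (fun i => Odd i), a ((i : ℕ) : ZMod n)
      = E * O := by
    rw [hE, hO, Finset.sum_mul_sum]
    simp only [hak]
    rw [← Finset.sum_product', ← Finset.sum_product']
    refine Finset.sum_nbij'
      (i := fun x => if e x.2 = 0 then (x.2, x.2 - (x.1 : ZMod n)) else (x.2 - (x.1 : ZMod n), x.2))
      (j := fun y => if (y.1 - y.2).val < n / 2 then ((y.1 - y.2).val, y.1) else ((y.2 - y.1).val, y.2))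
      ?_ ?_ ?_ ?_ ?_
    · rintro ⟨j, i⟩ hx
      rw [Finset.mem_product, Finset.mem_filter, Finset.mem_Ico] at hx
      obtain ⟨⟨⟨hj1, hj2⟩, hjodd⟩, -⟩ := hx
      have hej : e ((j : ℕ) : ZMod n) = 1 := by rw [enat]; exact (hodd_cast j).mp hjodd
      dsimp only
      by_cases hei : e i = 0
      · rw [if_pos hei]
        simp only [Finset.mem_product, hEv, hOd, Finset.mem_filter, Finset.mem_univ, true_and]
        exact ⟨hei, by rw [esub, hei, hej]; decide⟩
      · rw [if_neg hei]
        have hei1 : e i = 1 := (h01 (e i)).mp hei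
        simp only [Finset.mem_product, hEv, hOd, Finset.mem_filter, Finset.mem_univ, true_and]
        exact ⟨by rw [esub, hei1, hej]; decide, hei1⟩
    · rintro ⟨p, q⟩ hy
      rw [Finset.mem_product, hEv, hOd, Finset.mem_filter, Finset.mem_filter] at hy
      obtain ⟨⟨-, hp⟩, -, hq⟩ := hy
      have hd : e (p - q) = 1 := by rw [esub, hp, hq]; decide
      have hdodd : Odd ((p - q).val) := (hodd_cast _).mpr hd
      have hd' : e (q - p) = 1 := by rw [esub, hp, hq]; decide
      have hdodd' : Odd ((q - p).val) := (hodd_cast _).mpr hd'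
      have hpq : p - q ≠ 0 := by
        intro h0; rw [h0] at hd; simp [he] at hd
      have hval : (q - p).val = n - (p - q).val := by
        have : q - p = -(p - q) := by ring
        rw [this, ZMod.neg_val, if_neg hpq]
      have hvlt : (p - q).val < n := ZMod.val_lt _
      have hne : (p - q).val ≠ n / 2 := by
        have h5 := Nat.odd_iff.mp hdodd
        obtain ⟨m, hm⟩ := hhalf_even
        omega
      dsimp only
      by_cases hlt : (p - q).val < n / 2
      · rw [if_pos hlt]
        simp only [Finset.mem_product, Finset.mem_filter, Finset.mem_Ico, Finset.mem_univ, and_true]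
        exact ⟨⟨Nat.one_le_iff_ne_zero.mpr (by rintro h0; rw [h0] at hdodd; simp [Nat.odd_iff] at hdodd), hlt⟩, hdodd⟩
      · rw [if_neg hlt]
        simp only [Finset.mem_product, Finset.mem_filter, Finset.mem_Ico, Finset.mem_univ, and_true]
        refine ⟨⟨Nat.one_le_iff_ne_zero.mpr (by rintro h0; rw [h0] at hdodd'; simp [Nat.odd_iff] at hdodd'), ?_⟩, hdodd'⟩
        rw [hval]; omega
    · rintro ⟨j, i⟩ hx
      rw [Finset.mem_product, Finset.mem_filter, Finset.mem_Ico] at hx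
      obtain ⟨⟨⟨hj1, hj2⟩, hjodd⟩, -⟩ := hx
      have hjn : j < n := by omega
      have hjval : ((j : ZMod n)).val = j := ZMod.val_natCast_of_lt hjn
      have hjne : ((j : ℕ) : ZMod n) ≠ 0 := by
        intro h0
        have := hjval
        rw [h0] at this
        simp [ZMod.val_zero] at this
        omega
      dsimp only
      by_cases hei : e i = 0
      · rw [if_pos hei]
        dsimp only
        have h1 : i - (i - (j : ZMod n)) = (j : ZMod n) := by ring
        rw [h1, hjval, if_pos hj2]
      · rw [if_neg hei]
        dsimp only
        have h1 : i - (j : ZMod n) - i = -(j : ZMod n) := by ring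
        rw [h1, ZMod.neg_val, if_neg hjne, hjval]
        rw [if_neg (by omega)]
        have h2 : i - (i - (j : ZMod n)) = (j : ZMod n) := by ring
        rw [h2, hjval]
    · rintro ⟨p, q⟩ hy
      rw [Finset.mem_product, hEv, hOd, Finset.mem_filter, Finset.mem_filter] at hy
      obtain ⟨⟨-, hp⟩, -, hq⟩ := hy
      have hcast : ∀ x : ZMod n, (((x.val : ℕ)) : ZMod n) = x := by
        intro x; simp [ZMod.natCast_val, ZMod.cast_id]
      dsimp only
      by_cases hlt : (p - q).val < n / 2
      · rw [if_pos hlt]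
        dsimp only
        rw [if_pos hp, hcast]
        have h3 : p - (p - q) = q := by ring
        rw [h3]
      · rw [if_neg hlt]
        dsimp only
        rw [if_neg (by rw [hq]; decide), hcast]
        have h3 : q - (q - p) = p := by ring
        rw [h3]
    · rintro ⟨j, i⟩ hx
      dsimp only
      by_cases hei : e i = 0
      · rw [if_pos hei]
      · rw [if_neg hei]
        exact mul_comm _ _
  rw [hmain]
  exact (by decide : ∀ u v : ZMod 2, u + v = 1 → u * v = 0) E O hEO
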